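/- For γ ∈ ℝ, Δ_s = Φ⁻¹(s + (1−s)Φ(γ)), and c_{y,k} = a·Δ_a^k + ∫_a^{1−b} Δ_s^k ds + b·Δ_{1−b}^k viewed as a function of (θ, σ) through γ = (t−θ)/σ, the partial derivatives satisfy ∂c_{y,k}/∂θ = −(kφ(γ)/σ)·[a(1−a)Δ_a^{k−1}/φ(Δ_a) + ∫_a^{1−b} (1−s)Δ_s^{k−1}/φ(Δ_s) ds + b²Δ_{1−b}^{k−1}/φ(Δ_{1−b})] and ∂c_{y,k}/∂σ = ((t−θ)/σ)·∂c_{y,k}/∂θ. -/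

import Mathlib

open MeasureTheory ProbabilityTheory Set Filter
open Topology

noncomputable def stdPhi (x : ℝ) : ℝ :=
  ∫ t in Set.Iic x, Real.exp (-t ^ 2 / 2) / Real.sqrt (2 * Real.pi)

noncomputable def stdphi (x : ℝ) : ℝ := Real.exp (-x ^ 2 / 2) / Real.sqrt (2 * Real.pi)

lemma stdphi_pos (x : ℝ) : 0 < stdphi x := by
  unfold stdphi
  have := Real.pi_pos
  positivity

lemma continuous_stdphi : Continuous stdphi := by
  unfold stdphi; fun_prop

lemma stdphi_eq (x : ℝ) : stdphi x = (Real.sqrt (2*Real.pi))⁻¹ * Real.exp (-(2⁻¹) * x^2) := by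
  unfold stdphi; rw [div_eq_inv_mul]; ring_nf

lemma integrable_stdphi : Integrable stdphi := by
  have h := (integrable_exp_neg_mul_sq (b := 2⁻¹) (by norm_num)).const_mul
    (Real.sqrt (2*Real.pi))⁻¹
  have e : (fun x : ℝ => (Real.sqrt (2*Real.pi))⁻¹ * Real.exp (-2⁻¹ * x ^ 2)) = stdphi := by
    funext x; rw [stdphi_eq]
  rwa [e] at h

lemma integrable_pow_mul_stdphi (n : ℕ) : Integrable (fun x => x ^ n * stdphi x) := by
  have h := (integrable_rpow_mul_exp_neg_mul_sq (b := 2⁻¹) (by norm_num)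
    (s := (n : ℝ)) (lt_of_lt_of_le (by norm_num) (Nat.cast_nonneg n))).const_mul (Real.sqrt (2*Real.pi))⁻¹
  have : (fun x : ℝ => (Real.sqrt (2*Real.pi))⁻¹ * (x ^ (n : ℝ) * Real.exp (-2⁻¹ * x ^ 2)))
      = fun x => x ^ n * stdphi x := by
    funext x
    rw [Real.rpow_natCast, stdphi_eq]; ring
  rwa [this] at h

lemma integral_stdphi : ∫ x, stdphi x = 1 := by
  have h : ∫ x : ℝ, Real.exp (-2⁻¹ * x ^ 2) = Real.sqrt (Real.pi / 2⁻¹) := integral_gaussian 2⁻¹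
  have h2 : Real.pi / 2⁻¹ = 2 * Real.pi := by ring
  have hpos : (0:ℝ) < Real.sqrt (2 * Real.pi) := Real.sqrt_pos.2 (by positivity)
  calc ∫ x, stdphi x = (Real.sqrt (2*Real.pi))⁻¹ * ∫ x : ℝ, Real.exp (-2⁻¹ * x ^ 2) := by
        rw [← smul_eq_mul, ← integral_smul]
        congr 1; funext x; rw [smul_eq_mul, ← stdphi_eq]
    _ = 1 := by rw [h, h2, inv_mul_cancel₀ hpos.ne']

lemma hasDerivAt_Iic_integral {f : ℝ → ℝ} (hf : Integrable f) (hc : Continuous f) (x : ℝ) :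
    HasDerivAt (fun y => ∫ t in Iic y, f t) (f x) x := by
  have key : ∀ y : ℝ, (∫ t in Iic y, f t) = (∫ t in Iic 0, f t) + ∫ t in (0:ℝ)..y, f t := by
    intro y
    rw [← intervalIntegral.integral_Iic_sub_Iic hf.integrableOn hf.integrableOn]
    ring
  have h2 : HasDerivAt (fun y => ∫ t in (0:ℝ)..y, f t) (f x) x :=
    intervalIntegral.integral_hasDerivAt_right hf.intervalIntegrable
      hc.stronglyMeasurable.stronglyMeasurableAtFilter hc.continuousAt
  simpa [← key] using h2.const_add (∫ t in Iic 0, f t)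

lemma stdPhi_eq_integral (x : ℝ) : stdPhi x = ∫ t in Iic x, stdphi t := rfl

lemma hasDerivAt_stdPhi (x : ℝ) : HasDerivAt stdPhi (stdphi x) x := by
  simpa [← stdPhi_eq_integral] using hasDerivAt_Iic_integral integrable_stdphi continuous_stdphi x

lemma continuous_stdPhi : Continuous stdPhi :=
  continuous_iff_continuousAt.2 fun x => (hasDerivAt_stdPhi x).continuousAt

lemma strictMono_stdPhi : StrictMono stdPhi :=
  strictMono_of_deriv_pos fun x => by
    rw [(hasDerivAt_stdPhi x).deriv]; exact stdphi_pos x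

lemma setIntegral_stdphi_pos {s : Set ℝ} (hs : MeasurableSet s) (h0 : 0 < volume s) :
    0 < ∫ t in s, stdphi t := by
  rw [setIntegral_pos_iff_support_of_nonneg_ae
    (Eventually.of_forall fun t => (stdphi_pos t).le) integrable_stdphi.integrableOn]
  have : Function.support stdphi = univ := by
    ext t; simp [Function.mem_support, (stdphi_pos t).ne']
  rwa [this, univ_inter]

lemma stdPhi_pos (x : ℝ) : 0 < stdPhi x := by
  rw [stdPhi_eq_integral]
  exact setIntegral_stdphi_pos measurableSet_Iic (by simp)

lemma stdPhi_add_Ioi (x : ℝ) : stdPhi x + ∫ t in Ioi x, stdphi t = 1 := by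
  rw [stdPhi_eq_integral, ← integral_stdphi, ← compl_Iic,
    integral_add_compl measurableSet_Iic integrable_stdphi]

lemma stdPhi_lt_one (x : ℝ) : stdPhi x < 1 := by
  have h := stdPhi_add_Ioi x
  have h2 : 0 < ∫ t in Ioi x, stdphi t :=
    setIntegral_stdphi_pos measurableSet_Ioi (by simp)
  linarith

lemma stdPhi_mem_Ioo (x : ℝ) : stdPhi x ∈ Ioo (0:ℝ) 1 := ⟨stdPhi_pos x, stdPhi_lt_one x⟩

lemma hasDerivAt_stdphi (x : ℝ) : HasDerivAt stdphi (-x * stdphi x) x := by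
  have h1 : HasDerivAt (fun y : ℝ => -y ^ 2 / 2) (-x) x := by
    have := ((hasDerivAt_pow 2 x).neg).div_const 2
    simpa using this.congr_deriv (by ring)
  have h2 := (h1.exp).div_const (Real.sqrt (2 * Real.pi))
  have e : (fun y : ℝ => Real.exp (-y ^ 2 / 2) / Real.sqrt (2 * Real.pi)) = stdphi := rfl
  rw [e] at h2
  exact h2.congr_deriv (by unfold stdphi; ring)

lemma tendsto_stdphi_atTop : Tendsto stdphi atTop (𝓝 0) := by
  have h1 : Tendsto (fun x : ℝ => -x ^ 2 / 2) atTop atBot := by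
    apply Tendsto.atBot_div_const (by norm_num)
    exact tendsto_neg_atBot_iff.mpr (tendsto_pow_atTop (by norm_num))
  have h2 : Tendsto (fun x : ℝ => Real.exp (-x ^ 2 / 2)) atTop (𝓝 0) :=
    Real.tendsto_exp_atBot.comp h1
  have h3 := h2.div_const (Real.sqrt (2 * Real.pi))
  rw [zero_div] at h3
  exact h3

lemma integral_Ioi_mul_stdphi (x : ℝ) : ∫ t in Ioi x, t * stdphi t = stdphi x := by
  have h := integral_Ioi_of_hasDerivAt_of_tendsto' (f := fun t => -stdphi t)
    (f' := fun t => t * stdphi t) (a := x) (m := 0)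
    (fun y _ => by exact (hasDerivAt_stdphi y).neg.congr_deriv (by ring))
    ((integrable_pow_mul_stdphi 1).integrableOn.congr_fun (fun y _ => by ring) measurableSet_Ioi)
    (by simpa using tendsto_stdphi_atTop.neg)
  simpa using h
lemma one_sub_stdPhi_eq (x : ℝ) : 1 - stdPhi x = ∫ t in Ioi x, stdphi t := by
  have := stdPhi_add_Ioi x; linarith

lemma one_sub_stdPhi_pos (x : ℝ) : 0 < 1 - stdPhi x := by linarith [stdPhi_lt_one x]

lemma tail_le (x : ℝ) (hx : 0 < x) : 1 - stdPhi x ≤ stdphi x / x := by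
  rw [one_sub_stdPhi_eq, ← integral_Ioi_mul_stdphi x]
  rw [div_eq_inv_mul, ← integral_const_mul]
  refine setIntegral_mono_on integrable_stdphi.integrableOn
    ?_ measurableSet_Ioi ?_
  · exact ((integrable_pow_mul_stdphi 1).integrableOn.congr_fun (fun y _ => by ring)
      measurableSet_Ioi).const_mul _
  intro t ht
  have h1 : 1 ≤ x⁻¹ * t := by
    rw [inv_mul_eq_div, le_div_iff₀ hx]; simpa using le_of_lt ht
  nlinarith [stdphi_pos t, (stdphi_pos t).le]

lemma tendsto_pow_mul_stdphi (n : ℕ) : Tendsto (fun x => x ^ n * stdphi x) atTop (𝓝 0) := by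
  have hO := rpow_mul_exp_neg_mul_sq_isLittleO_exp_neg (b := 2⁻¹) (by norm_num) (n : ℝ)
  have hg : Tendsto (fun x : ℝ => Real.exp (-(1/2) * x)) atTop (𝓝 0) := by
    have h1 : Tendsto (fun x : ℝ => x / 2) atTop atTop := tendsto_id.atTop_div_const (by norm_num)
    have := Real.tendsto_exp_neg_atTop_nhds_zero.comp h1
    refine this.congr fun x => by rw [Function.comp]; ring_nf
  have h0 : Tendsto (fun x : ℝ => x ^ (n:ℝ) * Real.exp (-2⁻¹ * x ^ 2)) atTop (𝓝 0) :=
    hO.isBigO.trans_tendsto hg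
  have := (h0.const_mul (Real.sqrt (2*Real.pi))⁻¹)
  rw [mul_zero] at this
  refine this.congr fun x => ?_
  rw [Real.rpow_natCast, stdphi_eq]; ring

lemma tendsto_pow_mul_one_sub (n : ℕ) :
    Tendsto (fun x => x ^ n * (1 - stdPhi x)) atTop (𝓝 0) := by
  apply tendsto_of_tendsto_of_tendsto_of_le_of_le' tendsto_const_nhds (tendsto_pow_mul_stdphi n)
  · filter_upwards [eventually_ge_atTop (0:ℝ)] with x hx
    exact mul_nonneg (pow_nonneg hx n) (one_sub_stdPhi_pos x).le
  · filter_upwards [eventually_ge_atTop (1:ℝ)] with x hx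
    have h1 := tail_le x (by linarith)
    have h2 : stdphi x / x ≤ stdphi x := by
      rw [div_le_iff₀ (by linarith)]
      nlinarith [stdphi_pos x]
    have := mul_le_mul_of_nonneg_left (h1.trans h2) (pow_nonneg (by linarith : (0:ℝ) ≤ x) n)
    linarith

lemma integrableOn_pow_mul_one_sub (n : ℕ) (A : ℝ) :
    IntegrableOn (fun x => x ^ n * (1 - stdPhi x)) (Ioi A) := by
  have hcont : Continuous (fun x => x ^ n * (1 - stdPhi x)) := by
    exact (continuous_pow n).mul (continuous_const.sub continuous_stdPhi)
  have h1 : IntegrableOn (fun x => x ^ n * (1 - stdPhi x)) (Ioc A (max A 1)) :=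
    (hcont.integrableOn_Icc).mono_set Ioc_subset_Icc_self
  have h2 : IntegrableOn (fun x => x ^ n * (1 - stdPhi x)) (Ioi (max A 1)) := by
    apply Integrable.mono' ((integrable_pow_mul_stdphi n).integrableOn)
      (hcont.aestronglyMeasurable.restrict)
    filter_upwards [ae_restrict_mem measurableSet_Ioi] with x hx
    have hx1 : (1:ℝ) ≤ x := le_of_lt (lt_of_le_of_lt (le_max_right A 1) hx)
    have h1 := tail_le x (by linarith)
    have h2 : stdphi x / x ≤ stdphi x := by
      rw [div_le_iff₀ (by linarith)]
      nlinarith [stdphi_pos x]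
    rw [Real.norm_eq_abs, abs_of_nonneg (mul_nonneg (pow_nonneg (by linarith) n)
      (one_sub_stdPhi_pos x).le)]
    have := mul_le_mul_of_nonneg_left (h1.trans h2) (pow_nonneg (by linarith : (0:ℝ) ≤ x) n)
    linarith
  have : Ioi A ⊆ Ioc A (max A 1) ∪ Ioi (max A 1) := by
    intro x hx
    rcases le_or_gt x (max A 1) with h | h
    · exact Or.inl ⟨hx, h⟩
    · exact Or.inr h
  exact (h1.union h2).mono_set this

section Inv
variable {Φinv : ℝ → ℝ} (hΦinv : ∀ v ∈ Set.Ioo (0 : ℝ) 1, stdPhi (Φinv v) = v)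
include hΦinv

lemma Phiinv_stdPhi (x : ℝ) : Φinv (stdPhi x) = x :=
  strictMono_stdPhi.injective (hΦinv _ (stdPhi_mem_Ioo x))

lemma Phiinv_lt_iff {v : ℝ} (hv : v ∈ Ioo (0:ℝ) 1) (x : ℝ) :
    Φinv v < x ↔ v < stdPhi x := by
  rw [← strictMono_stdPhi.lt_iff_lt, hΦinv v hv]

lemma lt_Phiinv_iff {v : ℝ} (hv : v ∈ Ioo (0:ℝ) 1) (x : ℝ) :
    x < Φinv v ↔ stdPhi x < v := by
  rw [← strictMono_stdPhi.lt_iff_lt, hΦinv v hv]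

lemma continuousAt_Phiinv {v : ℝ} (hv : v ∈ Ioo (0:ℝ) 1) : ContinuousAt Φinv v := by
  rw [ContinuousAt]
  apply tendsto_order.2
  constructor
  · intro x' hx'
    have h1 : stdPhi x' < v := by
      rw [← hΦinv v hv]; exact strictMono_stdPhi hx'
    filter_upwards [Ioo_mem_nhds h1 hv.2] with y hy
    have hy' : y ∈ Ioo (0:ℝ) 1 := ⟨lt_trans (stdPhi_mem_Ioo x').1 hy.1, hy.2⟩
    exact (lt_Phiinv_iff hΦinv hy' x').mpr hy.1
  · intro x' hx'
    have h1 : v < stdPhi x' := by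
      rw [← hΦinv v hv]; exact strictMono_stdPhi hx'
    filter_upwards [Ioo_mem_nhds hv.1 h1] with y hy
    have hy' : y ∈ Ioo (0:ℝ) 1 := ⟨hy.1, lt_trans hy.2 (stdPhi_mem_Ioo x').2⟩
    exact (Phiinv_lt_iff hΦinv hy' x').mpr hy.2

lemma hasDerivAt_Phiinv {v : ℝ} (hv : v ∈ Ioo (0:ℝ) 1) :
    HasDerivAt Φinv (stdphi (Φinv v))⁻¹ v :=
  HasDerivAt.of_local_left_inverse (continuousAt_Phiinv hΦinv hv)
    (hasDerivAt_stdPhi (Φinv v)) (stdphi_pos _).ne'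
    (Filter.eventually_iff_exists_mem.2 ⟨Ioo 0 1, Ioo_mem_nhds hv.1 hv.2, fun y hy => hΦinv y hy⟩)

end Inv

section Sub
variable {Φinv : ℝ → ℝ} (hΦinv : ∀ v ∈ Set.Ioo (0 : ℝ) 1, stdPhi (Φinv v) = v)
include hΦinv

lemma preimage_Ioo_eq {w₁ w₂ : ℝ} (h1 : w₁ ∈ Ioo (0:ℝ) 1) (h2 : w₂ ∈ Ioo (0:ℝ) 1) :
    {x : ℝ | w₁ < stdPhi x ∧ stdPhi x < w₂} = Ioo (Φinv w₁) (Φinv w₂) := by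
  ext x
  simp only [mem_setOf_eq, mem_Ioo]
  rw [Phiinv_lt_iff hΦinv h1, lt_Phiinv_iff hΦinv h2]

lemma preimage_Ioi_eq {w₁ : ℝ} (h1 : w₁ ∈ Ioo (0:ℝ) 1) :
    {x : ℝ | w₁ < stdPhi x ∧ stdPhi x < 1} = Ioi (Φinv w₁) := by
  ext x
  simp only [mem_setOf_eq, mem_Ioi]
  rw [Phiinv_lt_iff hΦinv h1]
  exact ⟨fun h => h.1, fun h => ⟨h, (stdPhi_mem_Ioo x).2⟩⟩

lemma sub_lemma {p : ℝ} (hp : p ∈ Ioo (0:ℝ) 1) {a c : ℝ} (ha : 0 ≤ a) (hac : a < c)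
    (hc : c ≤ 1) (H : ℝ → ℝ) :
    ∫ s in Ioo a c, H s =
      ∫ x in {x : ℝ | a + (1-a)*p < stdPhi x ∧ stdPhi x < c + (1-c)*p},
        (stdphi x / (1-p)) * H ((stdPhi x - p)/(1-p)) := by
  have hq : 0 < 1 - p := by linarith [hp.2]
  set S : Set ℝ := {x : ℝ | a + (1-a)*p < stdPhi x ∧ stdPhi x < c + (1-c)*p} with hS
  have hSmeas : MeasurableSet S := by
    have : S = stdPhi ⁻¹' (Ioo (a + (1-a)*p) (c + (1-c)*p)) := rfl
    rw [this]
    exact continuous_stdPhi.measurable measurableSet_Ioo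
  set g : ℝ → ℝ := fun x => (stdPhi x - p)/(1-p) with hg
  have hgmono : StrictMono g := fun x y hxy => by
    have h := strictMono_stdPhi hxy
    dsimp only [g]
    gcongr
  have hgd : ∀ x ∈ S, HasDerivWithinAt g (stdphi x / (1-p)) S x := fun x _ =>
    (((hasDerivAt_stdPhi x).sub_const p).div_const (1-p)).hasDerivWithinAt
  have himg : g '' S = Ioo a c := by
    apply Subset.antisymm
    · rintro _ ⟨x, hx, rfl⟩
      obtain ⟨hx1, hx2⟩ := hx
      constructor
      · rw [hg, lt_div_iff₀ hq]; nlinarith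
      · rw [hg, div_lt_iff₀ hq]; nlinarith
    · intro v hv
      have hv0 : 0 ≤ v := le_trans ha hv.1.le
      have hv1 : v < 1 := lt_of_lt_of_le hv.2 hc
      have hw : v + (1-v)*p ∈ Ioo (0:ℝ) 1 := by
        constructor
        · nlinarith [hp.1]
        · nlinarith [hp.2]
      refine ⟨Φinv (v + (1-v)*p), ?_, ?_⟩
      · have hPx : stdPhi (Φinv (v + (1-v)*p)) = v + (1-v)*p := hΦinv _ hw
        constructor
        · rw [hPx]; nlinarith [hv.1]
        · rw [hPx]; nlinarith [hv.2]
      · show (stdPhi (Φinv (v + (1-v)*p)) - p) / (1 - p) = v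
        rw [hΦinv _ hw]
        field_simp
        ring
  have key := integral_image_eq_integral_abs_deriv_smul hSmeas hgd
    (hgmono.injective.injOn) H
  rw [himg] at key
  rw [key]
  apply setIntegral_congr_fun hSmeas
  intro x _
  dsimp only
  rw [abs_of_pos (div_pos (stdphi_pos x) hq), smul_eq_mul]

end Sub

set_option maxHeartbeats 1000000 in
theorem keyC (a b : ℝ) (k : ℕ) (hk : 1 ≤ k)
    (ha : 0 ≤ a) (hab : a < 1 - b) (hb1 : 1 - b ≤ 1)
    (Φinv : ℝ → ℝ) (hΦinv : ∀ v ∈ Set.Ioo (0 : ℝ) 1, stdPhi (Φinv v) = v)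
    (Δ : ℝ → ℝ → ℝ) (hΔ : ∀ γ s, Δ γ s = Φinv (s + (1 - s) * stdPhi γ))
    (C : ℝ → ℝ)
    (hC : ∀ γ, C γ = a * (Δ γ a) ^ k + (∫ s in a..(1 - b), (Δ γ s) ^ k)
        + b * (Δ γ (1 - b)) ^ k)
    (γ B : ℝ)
    (hB : B = a * (1 - a) * (Δ γ a) ^ (k - 1) / stdphi (Δ γ a)
        + (∫ s in a..(1 - b), (1 - s) * (Δ γ s) ^ (k - 1) / stdphi (Δ γ s))
        + b ^ 2 * (Δ γ (1 - b)) ^ (k - 1) / stdphi (Δ γ (1 - b))) :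
    HasDerivAt C ((k : ℝ) * stdphi γ * B) γ := by
  have ha1 : a < 1 := lt_of_lt_of_le hab hb1
  have hb0 : 0 ≤ b := by linarith
  have hk0 : (k : ℝ) ≠ 0 := Nat.cast_ne_zero.2 (by omega)
  -- membership facts
  have memIoo : ∀ (γ' s : ℝ), 0 ≤ s → s < 1 → s + (1 - s) * stdPhi γ' ∈ Ioo (0:ℝ) 1 := by
    intro γ' s h0 h1
    obtain ⟨hp0, hp1⟩ := stdPhi_mem_Ioo γ'
    constructor
    · nlinarith
    · nlinarith
  -- A function
  set Afun : ℝ → ℝ := fun γ' => Φinv (a + (1 - a) * stdPhi γ') with hAfun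
  have hAd : HasDerivAt Afun ((stdphi (Afun γ))⁻¹ * ((1 - a) * stdphi γ)) γ := by
    have hinner : HasDerivAt (fun γ' => a + (1 - a) * stdPhi γ') ((1 - a) * stdphi γ) γ :=
      ((hasDerivAt_stdPhi γ).const_mul (1 - a)).const_add a
    exact (hasDerivAt_Phiinv hΦinv (memIoo γ a ha ha1)).comp γ hinner
  have hPhiA : ∀ γ', stdPhi (Afun γ') = a + (1 - a) * stdPhi γ' := fun γ' =>
    hΦinv _ (memIoo γ' a ha ha1)
  -- G function
  set G : ℝ → ℝ := fun y => ∫ x in Iic y, x ^ k * stdphi x with hG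
  have hcontk : Continuous (fun x : ℝ => x ^ k * stdphi x) :=
    (continuous_pow k).mul continuous_stdphi
  have hGd : ∀ y : ℝ, HasDerivAt G (y ^ k * stdphi y) y := fun y => by
    simpa using hasDerivAt_Iic_integral (integrable_pow_mul_stdphi k) hcontk y
  -- q function
  have hqd : HasDerivAt (fun γ' => 1 - stdPhi γ') (-stdphi γ) γ := by
    exact (hasDerivAt_stdPhi γ).const_sub 1
  have hqpos : ∀ γ' : ℝ, 0 < 1 - stdPhi γ' := fun γ' => by
    linarith [(stdPhi_mem_Ioo γ').2]
  have hqne : ∀ γ' : ℝ, 1 - stdPhi γ' ≠ 0 := fun γ' => (hqpos γ').ne'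
  -- the argument identity for substitution
  have harg : ∀ γ' x : ℝ,
      (stdPhi x - stdPhi γ') / (1 - stdPhi γ')
        + (1 - (stdPhi x - stdPhi γ') / (1 - stdPhi γ')) * stdPhi γ' = stdPhi x := by
    intro γ' x
    field_simp [hqne γ']
    ring
  -- f for integration by parts
  set f : ℝ → ℝ := fun y => y ^ k * (1 - stdPhi y) with hf
  set f' : ℝ → ℝ := fun y => (k:ℝ) * y ^ (k-1) * (1 - stdPhi y) - y ^ k * stdphi y with hf'
  have hfd : ∀ y : ℝ, HasDerivAt f (f' y) y := by
    intro y
    have h := (hasDerivAt_pow k y).mul ((hasDerivAt_stdPhi y).const_sub 1)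
    exact h.congr_deriv (by dsimp only [f']; ring)
  have hf'cont : Continuous f' := by
    apply Continuous.sub
    · exact (continuous_const.mul (continuous_pow (k-1))).mul
        (continuous_const.sub continuous_stdPhi)
    · exact hcontk
  have hcontk1 : Continuous (fun x : ℝ => x ^ (k-1) * (1 - stdPhi x)) :=
    (continuous_pow (k-1)).mul (continuous_const.sub continuous_stdPhi)
  rcases hb0.eq_or_lt with hb | hbpos
  · -- case b = 0
    subst hb
    set T : ℝ := ∫ x, x ^ k * stdphi x with hT
    have hIoiG : ∀ A : ℝ, (∫ x in Ioi A, x ^ k * stdphi x) = T - G A := by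
      intro A
      have h := integral_add_compl (s := Iic A) measurableSet_Iic
        (integrable_pow_mul_stdphi k) (μ := volume)
      rw [compl_Iic] at h
      dsimp only [G]
      linarith [h]
    have hSeq : ∀ γ' : ℝ,
        {x : ℝ | a + (1-a)*stdPhi γ' < stdPhi x ∧
          stdPhi x < (1-0) + (1-(1-0))*stdPhi γ'} = Ioi (Afun γ') := by
      intro γ'
      have e : (1-0:ℝ) + (1-(1-0))*stdPhi γ' = 1 := by ring
      rw [e]
      exact preimage_Ioi_eq hΦinv (memIoo γ' a ha ha1)
    have hI : ∀ γ' : ℝ, (∫ s in a..(1-0), (Δ γ' s) ^ k)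
        = (1 - stdPhi γ')⁻¹ * (T - G (Afun γ')) := by
      intro γ'
      rw [intervalIntegral.integral_of_le (by linarith : a ≤ 1 - 0),
        integral_Ioc_eq_integral_Ioo]
      have h1 : ∀ s : ℝ, (Δ γ' s) ^ k = (fun v => (Φinv (v + (1 - v) * stdPhi γ')) ^ k) s := by
        intro s; rw [hΔ]
      simp_rw [h1]
      rw [sub_lemma hΦinv (stdPhi_mem_Ioo γ') ha hab hb1
        (fun v => (Φinv (v + (1 - v) * stdPhi γ')) ^ k), hSeq γ']
      have h2 : ∀ x ∈ Ioi (Afun γ'),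
          stdphi x / (1 - stdPhi γ') *
            (Φinv ((stdPhi x - stdPhi γ') / (1 - stdPhi γ')
              + (1 - (stdPhi x - stdPhi γ') / (1 - stdPhi γ')) * stdPhi γ')) ^ k
          = (1 - stdPhi γ')⁻¹ * (x ^ k * stdphi x) := by
        intro x _
        rw [harg γ' x, Phiinv_stdPhi hΦinv x]
        field_simp
      rw [setIntegral_congr_fun measurableSet_Ioi h2, integral_const_mul, hIoiG]
    have hCfun : C = fun γ' => a * (Afun γ') ^ k
        + (1 - stdPhi γ')⁻¹ * (T - G (Afun γ')) := by
      funext γ'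
      rw [hC γ', hI γ', hΔ, hΔ, zero_mul, add_zero]
    have hW : (∫ s in a..(1-0), (1 - s) * (Δ γ s) ^ (k-1) / stdphi (Δ γ s))
        = (1 - stdPhi γ)⁻¹ * (1 - stdPhi γ)⁻¹
          * ∫ x in Ioi (Afun γ), x ^ (k-1) * (1 - stdPhi x) := by
      rw [intervalIntegral.integral_of_le (by linarith : a ≤ 1 - 0),
        integral_Ioc_eq_integral_Ioo]
      have h1 : ∀ s : ℝ, (1 - s) * (Δ γ s) ^ (k-1) / stdphi (Δ γ s)
          = (fun v => (1 - v) * (Φinv (v + (1 - v) * stdPhi γ)) ^ (k-1)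
              / stdphi (Φinv (v + (1 - v) * stdPhi γ))) s := by
        intro s; rw [hΔ]
      simp_rw [h1]
      rw [sub_lemma hΦinv (stdPhi_mem_Ioo γ) ha hab hb1 _, hSeq γ]
      have h2 : ∀ x ∈ Ioi (Afun γ),
          stdphi x / (1 - stdPhi γ) *
            ((1 - ((stdPhi x - stdPhi γ) / (1 - stdPhi γ))) *
              (Φinv ((stdPhi x - stdPhi γ) / (1 - stdPhi γ)
                + (1 - (stdPhi x - stdPhi γ) / (1 - stdPhi γ)) * stdPhi γ)) ^ (k-1)
              / stdphi (Φinv ((stdPhi x - stdPhi γ) / (1 - stdPhi γ)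
                + (1 - (stdPhi x - stdPhi γ) / (1 - stdPhi γ)) * stdPhi γ)))
          = (1 - stdPhi γ)⁻¹ * (1 - stdPhi γ)⁻¹ * (x ^ (k-1) * (1 - stdPhi x)) := by
        intro x _
        rw [harg γ x, Phiinv_stdPhi hΦinv x]
        have hφx := (stdphi_pos x).ne'
        field_simp [hφx, hqne γ]
        ring
      rw [setIntegral_congr_fun measurableSet_Ioi h2, integral_const_mul]
    -- integration by parts on Ioi
    have i1 : IntegrableOn (fun y => (k:ℝ) * y ^ (k-1) * (1 - stdPhi y)) (Ioi (Afun γ)) :=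
      ((integrableOn_pow_mul_one_sub (k-1) (Afun γ)).const_mul (k:ℝ)).congr
        (Eventually.of_forall fun y => by ring)
    have i2 : IntegrableOn (fun y => y ^ k * stdphi y) (Ioi (Afun γ)) :=
      (integrable_pow_mul_stdphi k).integrableOn
    have hint1 : IntegrableOn f' (Ioi (Afun γ)) := i1.sub i2
    have htend : Tendsto f atTop (𝓝 0) := tendsto_pow_mul_one_sub k
    have hftc := integral_Ioi_of_hasDerivAt_of_tendsto' (fun y _ => hfd y) hint1 htend
    have hsplit : (∫ y in Ioi (Afun γ), f' y)
        = (k:ℝ) * (∫ y in Ioi (Afun γ), y ^ (k-1) * (1 - stdPhi y))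
          - ∫ y in Ioi (Afun γ), y ^ k * stdphi y := by
      have h := integral_sub i1 i2
      have e0 : (∫ y in Ioi (Afun γ), f' y)
          = ∫ y in Ioi (Afun γ), ((k:ℝ) * y ^ (k-1) * (1 - stdPhi y) - y ^ k * stdphi y) := rfl
      have e1 : (∫ y in Ioi (Afun γ), (k:ℝ) * y ^ (k-1) * (1 - stdPhi y))
          = (k:ℝ) * ∫ y in Ioi (Afun γ), y ^ (k-1) * (1 - stdPhi y) := by
        rw [← integral_const_mul]
        exact setIntegral_congr_fun measurableSet_Ioi fun y _ => by ring
      rw [e0, h, e1]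
    have efA : f (Afun γ) = (Afun γ) ^ k * ((1 - a) * (1 - stdPhi γ)) := by
      dsimp only [f]; rw [hPhiA γ]; ring_nf
    have hparts : (k:ℝ) * (∫ x in Ioi (Afun γ), x ^ (k-1) * (1 - stdPhi x))
        = (T - G (Afun γ)) - (1 - a) * (1 - stdPhi γ) * (Afun γ) ^ k := by
      rw [hsplit, efA, hIoiG] at hftc
      linarith [hftc]
    rw [hCfun]
    have htotal : HasDerivAt (fun γ' => a * (Afun γ') ^ k
        + (1 - stdPhi γ')⁻¹ * (T - G (Afun γ')))
        (a * ((k:ℝ) * (Afun γ) ^ (k-1) * ((stdphi (Afun γ))⁻¹ * ((1 - a) * stdphi γ)))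
         + ((-(-stdphi γ) / (1 - stdPhi γ) ^ 2) * (T - G (Afun γ))
            + (1 - stdPhi γ)⁻¹ *
              (0 - (Afun γ) ^ k * stdphi (Afun γ) *
                ((stdphi (Afun γ))⁻¹ * ((1 - a) * stdphi γ))))) γ := by
      refine HasDerivAt.add ?_ ?_
      · exact (hAd.pow k).const_mul a
      · exact (hqd.inv (hqne γ)).mul ((hasDerivAt_const γ T).sub ((hGd (Afun γ)).comp γ hAd))
    refine htotal.congr_deriv ?_
    rw [hB, hW, hΔ, hΔ,
      show Φinv (a + (1 - a) * stdPhi γ) = Afun γ from rfl,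
      show ((0:ℝ))^2 = 0 from by norm_num, zero_mul, zero_div, add_zero]
    have hWval : (∫ x in Ioi (Afun γ), x ^ (k-1) * (1 - stdPhi x))
        = ((T - G (Afun γ)) - (1 - a) * (1 - stdPhi γ) * (Afun γ) ^ k) / k := by
      rw [eq_div_iff hk0]; linarith [hparts]
    rw [hWval]
    have h1 := (stdphi_pos (Afun γ)).ne'
    have h3 := hqne γ
    generalize (Afun γ) = vA at *
    generalize (G vA) = gA
    generalize hq' : (1 - stdPhi γ) = vq at *
    generalize (stdphi γ) = vphi
    field_simp
    ring
  · -- case 0 < b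
    have hc1 : 1 - b < 1 := by linarith
    set Xfun : ℝ → ℝ := fun γ' => Φinv ((1 - b) + (1 - (1 - b)) * stdPhi γ') with hXfun
    have hXd : HasDerivAt Xfun ((stdphi (Xfun γ))⁻¹ * ((1 - (1 - b)) * stdphi γ)) γ := by
      have hinner : HasDerivAt (fun γ' => (1 - b) + (1 - (1 - b)) * stdPhi γ')
          ((1 - (1 - b)) * stdphi γ) γ :=
        ((hasDerivAt_stdPhi γ).const_mul (1 - (1 - b))).const_add (1 - b)
      exact (hasDerivAt_Phiinv hΦinv (memIoo γ (1-b) (by linarith) hc1)).comp γ hinner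
    have hPhiX : ∀ γ', stdPhi (Xfun γ') = (1 - b) + (1 - (1 - b)) * stdPhi γ' := fun γ' =>
      hΦinv _ (memIoo γ' (1-b) (by linarith) hc1)
    have hAX : ∀ γ', Afun γ' < Xfun γ' := by
      intro γ'
      rw [hAfun, lt_Phiinv_iff hΦinv (memIoo γ' (1-b) (by linarith) hc1), hPhiA γ']
      nlinarith [hqpos γ']
    -- the set S
    have hSeq : ∀ γ' : ℝ,
        {x : ℝ | a + (1-a)*stdPhi γ' < stdPhi x ∧
          stdPhi x < (1-b) + (1-(1-b))*stdPhi γ'} = Ioo (Afun γ') (Xfun γ') := fun γ' =>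
      preimage_Ioo_eq hΦinv (memIoo γ' a ha ha1) (memIoo γ' (1-b) (by linarith) hc1)
    -- substitution for C's integral
    have hI : ∀ γ' : ℝ, (∫ s in a..(1-b), (Δ γ' s) ^ k)
        = (1 - stdPhi γ')⁻¹ * (G (Xfun γ') - G (Afun γ')) := by
      intro γ'
      rw [intervalIntegral.integral_of_le (by linarith : a ≤ 1 - b),
        integral_Ioc_eq_integral_Ioo]
      have h1 : ∀ s : ℝ, (Δ γ' s) ^ k = (fun v => (Φinv (v + (1 - v) * stdPhi γ')) ^ k) s := by
        intro s; rw [hΔ]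
      simp_rw [h1]
      rw [sub_lemma hΦinv (stdPhi_mem_Ioo γ') ha hab hb1
        (fun v => (Φinv (v + (1 - v) * stdPhi γ')) ^ k), hSeq γ']
      have h2 : ∀ x ∈ Ioo (Afun γ') (Xfun γ'),
          stdphi x / (1 - stdPhi γ') *
            (Φinv ((stdPhi x - stdPhi γ') / (1 - stdPhi γ')
              + (1 - (stdPhi x - stdPhi γ') / (1 - stdPhi γ')) * stdPhi γ')) ^ k
          = (1 - stdPhi γ')⁻¹ * (x ^ k * stdphi x) := by
        intro x _
        rw [harg γ' x, Phiinv_stdPhi hΦinv x]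
        field_simp
      rw [setIntegral_congr_fun measurableSet_Ioo h2, integral_const_mul]
      congr 1
      rw [← integral_Ioc_eq_integral_Ioo,
        ← intervalIntegral.integral_of_le (hAX γ').le,
        intervalIntegral.integral_Iic_sub_Iic (integrable_pow_mul_stdphi k).integrableOn
          (integrable_pow_mul_stdphi k).integrableOn]
    -- closed form for C
    have hCfun : C = fun γ' => a * (Afun γ') ^ k
        + (1 - stdPhi γ')⁻¹ * (G (Xfun γ') - G (Afun γ')) + b * (Xfun γ') ^ k := by
      funext γ'
      rw [hC γ', hI γ', hΔ, hΔ]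
    -- substitution for B's integral
    have hW : (∫ s in a..(1-b), (1 - s) * (Δ γ s) ^ (k-1) / stdphi (Δ γ s))
        = (1 - stdPhi γ)⁻¹ * (1 - stdPhi γ)⁻¹
          * ∫ x in Ioo (Afun γ) (Xfun γ), x ^ (k-1) * (1 - stdPhi x) := by
      rw [intervalIntegral.integral_of_le (by linarith : a ≤ 1 - b),
        integral_Ioc_eq_integral_Ioo]
      have h1 : ∀ s : ℝ, (1 - s) * (Δ γ s) ^ (k-1) / stdphi (Δ γ s)
          = (fun v => (1 - v) * (Φinv (v + (1 - v) * stdPhi γ)) ^ (k-1)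
              / stdphi (Φinv (v + (1 - v) * stdPhi γ))) s := by
        intro s; rw [hΔ]
      simp_rw [h1]
      rw [sub_lemma hΦinv (stdPhi_mem_Ioo γ) ha hab hb1 _, hSeq γ]
      have h2 : ∀ x ∈ Ioo (Afun γ) (Xfun γ),
          stdphi x / (1 - stdPhi γ) *
            ((1 - ((stdPhi x - stdPhi γ) / (1 - stdPhi γ))) *
              (Φinv ((stdPhi x - stdPhi γ) / (1 - stdPhi γ)
                + (1 - (stdPhi x - stdPhi γ) / (1 - stdPhi γ)) * stdPhi γ)) ^ (k-1)
              / stdphi (Φinv ((stdPhi x - stdPhi γ) / (1 - stdPhi γ)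
                + (1 - (stdPhi x - stdPhi γ) / (1 - stdPhi γ)) * stdPhi γ)))
          = (1 - stdPhi γ)⁻¹ * (1 - stdPhi γ)⁻¹ * (x ^ (k-1) * (1 - stdPhi x)) := by
        intro x _
        rw [harg γ x, Phiinv_stdPhi hΦinv x]
        have hφx := (stdphi_pos x).ne'
        field_simp [hφx, hqne γ]
        ring
      rw [setIntegral_congr_fun measurableSet_Ioo h2, integral_const_mul]
    -- integration by parts identity
    have hparts : (k:ℝ) * (∫ x in Ioo (Afun γ) (Xfun γ), x ^ (k-1) * (1 - stdPhi x))
        = (G (Xfun γ) - G (Afun γ))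
          + b * (1 - stdPhi γ) * (Xfun γ) ^ k
          - (1 - a) * (1 - stdPhi γ) * (Afun γ) ^ k := by
      have hftc := intervalIntegral.integral_eq_sub_of_hasDerivAt
        (f := f) (f' := f') (a := Afun γ) (b := Xfun γ)
        (fun y _ => hfd y) (hf'cont.intervalIntegrable _ _)
      have hsplit : (∫ y in (Afun γ)..(Xfun γ), f' y)
          = (k:ℝ) * (∫ y in (Afun γ)..(Xfun γ), y ^ (k-1) * (1 - stdPhi y))
            - ∫ y in (Afun γ)..(Xfun γ), y ^ k * stdphi y := by
        rw [← intervalIntegral.integral_const_mul, ← intervalIntegral.integral_sub]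
        · apply intervalIntegral.integral_congr
          intro y _
          dsimp only [f']
          ring
        · exact ((continuous_const.mul hcontk1).intervalIntegrable _ _)
        · exact (hcontk.intervalIntegrable _ _)
      have e1 : (∫ y in (Afun γ)..(Xfun γ), y ^ (k-1) * (1 - stdPhi y))
          = ∫ x in Ioo (Afun γ) (Xfun γ), x ^ (k-1) * (1 - stdPhi x) := by
        rw [intervalIntegral.integral_of_le (hAX γ).le, integral_Ioc_eq_integral_Ioo]
      have e2 : (∫ y in (Afun γ)..(Xfun γ), y ^ k * stdphi y) = G (Xfun γ) - G (Afun γ) := by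
        rw [intervalIntegral.integral_Iic_sub_Iic (integrable_pow_mul_stdphi k).integrableOn
          (integrable_pow_mul_stdphi k).integrableOn]
      have efX : f (Xfun γ) = (Xfun γ) ^ k * (b * (1 - stdPhi γ)) := by
        dsimp only [f]; rw [hPhiX γ]; ring_nf
      have efA : f (Afun γ) = (Afun γ) ^ k * ((1 - a) * (1 - stdPhi γ)) := by
        dsimp only [f]; rw [hPhiA γ]; ring_nf
      rw [hsplit, e1, e2, efX, efA] at hftc
      linarith [hftc]
    -- assemble
    rw [hCfun]
    have htotal : HasDerivAt (fun γ' => a * (Afun γ') ^ k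
        + (1 - stdPhi γ')⁻¹ * (G (Xfun γ') - G (Afun γ')) + b * (Xfun γ') ^ k)
        (a * ((k:ℝ) * (Afun γ) ^ (k-1) * ((stdphi (Afun γ))⁻¹ * ((1 - a) * stdphi γ)))
         + ((-(-stdphi γ) / (1 - stdPhi γ) ^ 2) * (G (Xfun γ) - G (Afun γ))
            + (1 - stdPhi γ)⁻¹ *
              ((Xfun γ) ^ k * stdphi (Xfun γ) * ((stdphi (Xfun γ))⁻¹ * ((1 - (1 - b)) * stdphi γ))
               - (Afun γ) ^ k * stdphi (Afun γ) * ((stdphi (Afun γ))⁻¹ * ((1 - a) * stdphi γ))))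
         + b * ((k:ℝ) * (Xfun γ) ^ (k-1) * ((stdphi (Xfun γ))⁻¹ * ((1 - (1 - b)) * stdphi γ)))) γ := by
      refine HasDerivAt.add (HasDerivAt.add ?_ ?_) ?_
      · exact (hAd.pow k).const_mul a
      · exact (hqd.inv (hqne γ)).mul (((hGd (Xfun γ)).comp γ hXd).sub ((hGd (Afun γ)).comp γ hAd))
      · exact (hXd.pow k).const_mul b
    refine htotal.congr_deriv ?_
    rw [hB, hW, hΔ, hΔ,
      show Φinv (a + (1 - a) * stdPhi γ) = Afun γ from rfl,
      show Φinv (1 - b + (1 - (1 - b)) * stdPhi γ) = Xfun γ from rfl]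
    have hWval : (∫ x in Ioo (Afun γ) (Xfun γ), x ^ (k-1) * (1 - stdPhi x))
        = ((G (Xfun γ) - G (Afun γ))
          + b * (1 - stdPhi γ) * (Xfun γ) ^ k
          - (1 - a) * (1 - stdPhi γ) * (Afun γ) ^ k) / k := by
      rw [eq_div_iff hk0]; linarith [hparts]
    rw [hWval]
    have h1 := (stdphi_pos (Afun γ)).ne'
    have h2 := (stdphi_pos (Xfun γ)).ne'
    have h3 := hqne γ
    generalize (Afun γ) = vA at *
    generalize (Xfun γ) = vX at *
    generalize (G vA) = gA
    generalize (G vX) = gX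
    generalize hq' : (1 - stdPhi γ) = vq at *
    generalize (stdphi γ) = vphi
    field_simp
    ring

theorem stmt19 (a b t θ σ : ℝ) (k : ℕ) (hk : 1 ≤ k) (hσ : 0 < σ)
    (ha : 0 ≤ a) (hab : a < 1 - b) (hb1 : 1 - b ≤ 1)
    (Φinv : ℝ → ℝ) (hΦinv : ∀ v ∈ Set.Ioo (0 : ℝ) 1, stdPhi (Φinv v) = v)
    (Δ : ℝ → ℝ → ℝ) (hΔ : ∀ γ s, Δ γ s = Φinv (s + (1 - s) * stdPhi γ))
    (C : ℝ → ℝ)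
    (hC : ∀ γ, C γ = a * (Δ γ a) ^ k + (∫ s in a..(1 - b), (Δ γ s) ^ k)
        + b * (Δ γ (1 - b)) ^ k)
    (γ : ℝ) (hγ : γ = (t - θ) / σ)
    (B : ℝ)
    (hB : B = a * (1 - a) * (Δ γ a) ^ (k - 1) / stdphi (Δ γ a)
        + (∫ s in a..(1 - b), (1 - s) * (Δ γ s) ^ (k - 1) / stdphi (Δ γ s))
        + b ^ 2 * (Δ γ (1 - b)) ^ (k - 1) / stdphi (Δ γ (1 - b))) :
    HasDerivAt (fun θ' : ℝ => C ((t - θ') / σ))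
      (-((k : ℝ) * stdphi γ / σ) * B) θ
    ∧ HasDerivAt (fun σ' : ℝ => C ((t - θ) / σ'))
      (((t - θ) / σ) * (-((k : ℝ) * stdphi γ / σ) * B)) σ := by
  subst hγ
  have key := keyC a b k hk ha hab hb1 Φinv hΦinv Δ hΔ C hC _ B hB
  have hσne : σ ≠ 0 := hσ.ne'
  constructor
  · have hg : HasDerivAt (fun θ' : ℝ => (t - θ') / σ) (-1 / σ) θ := by
      have := ((hasDerivAt_id θ).const_sub t).div_const σ
      simpa using this
    have h := key.comp θ hg
    have e : (C ∘ fun θ' : ℝ => (t - θ') / σ) = fun θ' : ℝ => C ((t - θ') / σ) := rfl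
    rw [e] at h
    refine h.congr_deriv ?_
    field_simp
  · have hg : HasDerivAt (fun σ' : ℝ => (t - θ) / σ') ((t - θ) * (-(σ ^ 2)⁻¹)) σ := by
      have h2 := (hasDerivAt_inv hσne).const_mul (t - θ)
      have e : (fun σ' : ℝ => (t - θ) / σ') = fun σ' : ℝ => (t - θ) * σ'⁻¹ := by
        funext σ'; rw [div_eq_mul_inv]
      rw [e]
      exact h2
    have h := key.comp σ hg
    have e : (C ∘ fun σ' : ℝ => (t - θ) / σ') = fun σ' : ℝ => C ((t - θ) / σ') := rfl
    rw [e] at h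
    refine h.congr_deriv ?_
    field_simp
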